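/- Let n≥2 be an integer and g a nonnegative integer with gcd(n,g)=1. Then det C_{n,g}(J) = det(Q_g) · [ (1 − J_{n+1})^{n−1} + 2^{n−1}·J_n^{n−2} · Σ_{i=1}^{n−1} J_i · ((1 − J_{n+1})/(2J_n))^{i−1} ]. -/

import Mathlib

/-- The `g`-circulant matrix of size `n` with first row `(a 0, a 1, …, a (n-1))`:
its `(i,j)` entry (0-indexed) equals `a ((j - i*g) mod n)`. -/
def gCirc {α : Type*} (n g : ℕ) (a : ℕ → α) : Matrix (Fin n) (Fin n) α :=
  Matrix.of fun i j => a ((j.val + (n - (i.val * g) % n)) % n)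

/-- `Q_g`: the `g`-circulant matrix with first row `(1,0,…,0)`. -/
def Qg (n g : ℕ) : Matrix (Fin n) (Fin n) ℝ :=
  gCirc n g (fun m => if m = 0 then (1 : ℝ) else 0)

/-- Row-operation matrix. -/
def Pm (N : ℕ) : Matrix (Fin (N+2)) (Fin (N+2)) ℝ :=
  Matrix.of fun i k =>
    if (k:ℕ) = i then 1
    else if (i:ℕ) < N ∧ (k:ℕ) = (i:ℕ)+1 then -1
    else if (i:ℕ) < N ∧ (k:ℕ) = (i:ℕ)+2 then -2 else 0

/-- Column-operation matrix. -/
def Tm (N : ℕ) (w : ℝ) : Matrix (Fin (N+2)) (Fin (N+2)) ℝ :=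
  Matrix.of fun k j => if (k:ℕ) ≤ j then w^((j:ℕ) - k) else 0

def Bm (N : ℕ) (u v : ℝ) (A : Matrix (Fin (N+2)) (Fin (N+2)) ℝ) :
    Matrix (Fin (N+2)) (Fin (N+2)) ℝ :=
  Matrix.of fun i j =>
    if (i:ℕ) < N then (if (j:ℕ) = i then u else if (j:ℕ) = (i:ℕ)+1 then -v else 0)
    else A i j

def Cm (N : ℕ) (u w : ℝ) (J : ℕ → ℝ) : Matrix (Fin (N+2)) (Fin (N+2)) ℝ :=
  Matrix.of fun i j =>
    if (i:ℕ) < N then (if (j:ℕ) = i then u else 0)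
    else ∑ k ∈ Finset.range ((j:ℕ)+1), J ((k + (N+2) - (i:ℕ)) % (N+2) + 1) * w^((j:ℕ) - k)

lemma Pm_det (N : ℕ) : (Pm N).det = 1 := by
  rw [Matrix.det_of_upperTriangular (M := Pm N)]
  · apply Finset.prod_eq_one
    intro i _
    simp [Pm]
  · intro i j h
    have hlt : (j:ℕ) < (i:ℕ) := by simpa using h
    simp only [Pm, Matrix.of_apply]
    split_ifs <;> first | rfl | omega

lemma Tm_det (N : ℕ) (w : ℝ) : (Tm N w).det = 1 := by
  rw [Matrix.det_of_upperTriangular (M := Tm N w)]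
  · apply Finset.prod_eq_one
    intro i _
    simp [Tm]
  · intro i j h
    have hlt : (j:ℕ) < (i:ℕ) := by simpa using h
    simp only [Tm, Matrix.of_apply]
    split_ifs <;> first | rfl | omega

section Main

variable (J : ℕ → ℝ)

lemma hA_eval (N : ℕ) (p j : Fin (N+2)) :
    gCirc (N+2) 1 (fun m => J (m+1)) p j = J (((j:ℕ) + (N+2) - (p:ℕ)) % (N+2) + 1) := by
  simp only [gCirc, Matrix.of_apply, mul_one, Nat.mod_eq_of_lt p.isLt]
  have harg : (j:ℕ) + ((N+2) - (p:ℕ)) = (j:ℕ) + (N+2) - (p:ℕ) := by omega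
  rw [harg]

lemma hmod (N x y : ℕ) (hy : y < N+2) (h : x = y ∨ x = y + (N+2)) : x % (N+2) = y := by
  rcases h with rfl | rfl
  · exact Nat.mod_eq_of_lt hy
  · rw [Nat.add_mod_right]; exact Nat.mod_eq_of_lt hy

lemma hA_val (N : ℕ) (p j : Fin (N+2)) (y : ℕ) (hy : y < N+2)
    (h : (j:ℕ) + (N+2) - (p:ℕ) = y ∨ (j:ℕ) + (N+2) - (p:ℕ) = y + (N+2)) :
    gCirc (N+2) 1 (fun m => J (m+1)) p j = J (y + 1) := by
  rw [hA_eval, hmod N _ y hy h]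

variable (hJ0 : J 0 = 0) (hJ1 : J 1 = 1)
  (hrec : ∀ m : ℕ, J (m + 2) = J (m + 1) + 2 * J m)

include hJ0 hJ1 hrec

lemma jac_pos : ∀ m, 0 ≤ J m ∧ 1 ≤ J (m + 1) := by
  intro m
  induction m with
  | zero => simp [hJ0, hJ1]
  | succ k ih => exact ⟨by linarith [ih.2], by rw [hrec]; linarith [ih.1, ih.2]⟩

lemma PA_eq (N : ℕ) :
    Pm N * gCirc (N+2) 1 (fun m => J (m+1)) =
      Bm N (1 - J (N+3)) (2 * J (N+2)) (gCirc (N+2) 1 (fun m => J (m+1))) := by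
  set A := gCirc (N+2) 1 (fun m => J (m+1)) with hAdef
  have hAv : ∀ (p j : Fin (N+2)) (y : ℕ), y < N+2 →
      ((j:ℕ) + (N+2) - (p:ℕ) = y ∨ (j:ℕ) + (N+2) - (p:ℕ) = y + (N+2)) → A p j = J (y+1) :=
    fun p j y hy h => hA_val J N p j y hy h
  ext i j
  rw [Matrix.mul_apply]
  by_cases hi : (i:ℕ) < N
  · have h1 : (i:ℕ) < N+2 := by omega
    have h2 : (i:ℕ)+1 < N+2 := by omega
    have h3 : (i:ℕ)+2 < N+2 := by omega
    have step : ∀ k : Fin (N+2), Pm N i k * A k j =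
        (if k = i then A k j else 0) +
        ((if k = (⟨(i:ℕ)+1, h2⟩ : Fin (N+2)) then -(A k j) else 0) +
         (if k = (⟨(i:ℕ)+2, h3⟩ : Fin (N+2)) then -(2 * A k j) else 0)) := by
      intro k
      simp only [Pm, Matrix.of_apply, Fin.ext_iff]
      split_ifs <;> first | ring1 | (exfalso; omega)
    rw [Finset.sum_congr rfl (fun k _ => step k), Finset.sum_add_distrib,
      Finset.sum_add_distrib, Finset.sum_ite_eq', Finset.sum_ite_eq', Finset.sum_ite_eq']
    simp only [Finset.mem_univ, if_true]
    simp only [Bm, Matrix.of_apply, if_pos hi]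
    by_cases hji : (j:ℕ) = (i:ℕ)
    · rw [if_pos hji]
      rw [hAv i j 0 (by omega) (by omega),
        hAv ⟨(i:ℕ)+1, h2⟩ j (N+1) (by omega) (by simp only []; omega),
        hAv ⟨(i:ℕ)+2, h3⟩ j N (by omega) (by simp only []; omega)]
      rw [hJ1]
      have h := hrec (N+1)
      linarith
    · by_cases hji1 : (j:ℕ) = (i:ℕ)+1
      · rw [if_neg hji, if_pos hji1]
        rw [hAv i j 1 (by omega) (by omega),
          hAv ⟨(i:ℕ)+1, h2⟩ j 0 (by omega) (by simp only []; omega),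
          hAv ⟨(i:ℕ)+2, h3⟩ j (N+1) (by omega) (by simp only []; omega)]
        have h2' : J 2 = 1 := by rw [hrec 0, hJ0, hJ1]; ring
        rw [h2', hJ1]
        ring
      · rw [if_neg hji, if_neg hji1]
        have key : ∀ y : ℕ, 2 ≤ y → J (y+1) + (-(J (y-1+1)) + -(2 * J (y-2+1))) = 0 := by
          intro y hy
          obtain ⟨z, rfl⟩ : ∃ z, y = z + 2 := ⟨y - 2, by omega⟩
          have h := hrec (z+1)
          have e1 : z + 2 - 1 + 1 = z + 1 + 1 := by omega
          have e2 : z + 2 - 2 + 1 = z + 1 := by omega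
          rw [e1, e2]
          have e3 : z + 2 + 1 = z + 1 + 2 := by omega
          rw [e3, h]
          ring
        rcases Nat.lt_or_ge (j:ℕ) (i:ℕ) with hlt | hge
        · set y := (j:ℕ) + (N+2) - (i:ℕ) with hy
          have hy2 : 2 ≤ y ∧ y < N+2 := by omega
          rw [hAv i j y (by omega) (by omega),
            hAv ⟨(i:ℕ)+1, h2⟩ j (y-1) (by omega) (by simp only []; omega),
            hAv ⟨(i:ℕ)+2, h3⟩ j (y-2) (by omega) (by simp only []; omega)]
          exact key y hy2.1
        · have hge2 : (i:ℕ) + 2 ≤ (j:ℕ) := by omega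
          set y := (j:ℕ) - (i:ℕ) with hy
          rw [hAv i j y (by omega) (by omega),
            hAv ⟨(i:ℕ)+1, h2⟩ j (y-1) (by omega) (by simp only []; omega),
            hAv ⟨(i:ℕ)+2, h3⟩ j (y-2) (by omega) (by simp only []; omega)]
          exact key y (by omega)
  · have step : ∀ k : Fin (N+2), Pm N i k * A k j = if k = i then A k j else 0 := by
      intro k
      simp only [Pm, Matrix.of_apply, Fin.ext_iff]
      split_ifs <;> first | ring1 | (exfalso; omega)
    rw [Finset.sum_congr rfl (fun k _ => step k), Finset.sum_ite_eq']
    simp only [Finset.mem_univ, if_true, Bm, Matrix.of_apply, if_neg hi]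

end Main

section Main2

variable (J : ℕ → ℝ)

lemma BT_eq (N : ℕ) (u v w : ℝ) (hu : u ≠ 0) (huw : u * w = v) :
    Bm N u v (gCirc (N+2) 1 (fun m => J (m+1))) * Tm N w = Cm N u w J := by
  set A := gCirc (N+2) 1 (fun m => J (m+1)) with hAdef
  have hAe : ∀ (p q : Fin (N+2)), A p q = J (((q:ℕ) + (N+2) - (p:ℕ)) % (N+2) + 1) :=
    fun p q => hA_eval J N p q
  ext i j
  rw [Matrix.mul_apply]
  by_cases hi : (i:ℕ) < N
  · have h2 : (i:ℕ)+1 < N+2 := by omega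
    have step : ∀ k : Fin (N+2), Bm N u v A i k * Tm N w k j =
        (if k = i then u * Tm N w k j else 0) +
        (if k = (⟨(i:ℕ)+1, h2⟩ : Fin (N+2)) then -v * Tm N w k j else 0) := by
      intro k
      simp only [Bm, Matrix.of_apply, Fin.ext_iff, if_pos hi]
      split_ifs <;> first | ring1 | (exfalso; omega)
    rw [Finset.sum_congr rfl (fun k _ => step k), Finset.sum_add_distrib,
      Finset.sum_ite_eq', Finset.sum_ite_eq']
    simp only [Finset.mem_univ, if_true]
    simp only [Tm, Cm, Matrix.of_apply, if_pos hi]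
    rcases lt_trichotomy (j:ℕ) (i:ℕ) with h | h | h
    · rw [if_neg (by omega), if_neg (by omega), if_neg (by omega)]
      ring
    · rw [if_pos (by omega : (i:ℕ) ≤ (j:ℕ)), if_neg (show ¬((i:ℕ)+1 ≤ (j:ℕ)) by omega), if_pos (by omega)]
      have : (j:ℕ) - (i:ℕ) = 0 := by omega
      rw [this, pow_zero]
      ring
    · rw [if_pos (by omega : (i:ℕ) ≤ (j:ℕ)), if_pos (show (i:ℕ)+1 ≤ (j:ℕ) by omega),
        if_neg (by omega)]
      have e1 : (j:ℕ) - (i:ℕ) = ((j:ℕ) - ((i:ℕ)+1)) + 1 := by omega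
      have e2 : (j:ℕ) - (↑(⟨(i:ℕ)+1, h2⟩ : Fin (N+2)):ℕ) = (j:ℕ) - ((i:ℕ)+1) := rfl
      rw [e1, e2, pow_succ]
      linear_combination w ^ ((j:ℕ) - ((i:ℕ)+1)) * huw
  · have step : ∀ k : Fin (N+2), Bm N u v A i k * Tm N w k j =
        if (k:ℕ) ≤ (j:ℕ) then J (((k:ℕ) + (N+2) - (i:ℕ)) % (N+2) + 1) * w^((j:ℕ) - (k:ℕ)) else 0 := by
      intro k
      simp only [Bm, Tm, Matrix.of_apply, if_neg hi]
      rw [hAe i k]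
      split_ifs <;> ring
    rw [Finset.sum_congr rfl (fun k _ => step k)]
    rw [Fin.sum_univ_eq_sum_range
      (fun m => if m ≤ (j:ℕ) then J ((m + (N+2) - (i:ℕ)) % (N+2) + 1) * w^((j:ℕ) - m) else 0)]
    rw [← Finset.sum_filter]
    have hfil : (Finset.range (N+2)).filter (fun m => m ≤ (j:ℕ)) = Finset.range ((j:ℕ)+1) := by
      ext m
      simp only [Finset.mem_filter, Finset.mem_range]
      omega
    rw [hfil]
    simp only [Cm, Matrix.of_apply, if_neg hi]

end Main2

lemma Cm_det (N : ℕ) (u w : ℝ) (Jf : ℕ → ℝ) :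
    (Cm N u w Jf).det = u^N *
      ((∑ k ∈ Finset.range (N+1), Jf ((k + (N+2) - N) % (N+2) + 1) * w^(N - k)) *
       (∑ k ∈ Finset.range (N+2), Jf ((k + (N+2) - (N+1)) % (N+2) + 1) * w^(N+1 - k)) -
       (∑ k ∈ Finset.range (N+2), Jf ((k + (N+2) - N) % (N+2) + 1) * w^(N+1 - k)) *
       (∑ k ∈ Finset.range (N+1), Jf ((k + (N+2) - (N+1)) % (N+2) + 1) * w^(N - k))) := by
  set C := Cm N u w Jf with hC
  set X : Matrix (Fin 2) (Fin N) ℝ :=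
    Matrix.of fun p q => C (finSumFinEquiv (Sum.inr p)) (finSumFinEquiv (Sum.inl q)) with hX
  set Y : Matrix (Fin 2) (Fin 2) ℝ :=
    Matrix.of fun p q => C (finSumFinEquiv (Sum.inr p)) (finSumFinEquiv (Sum.inr q)) with hY
  have hsub : C.submatrix finSumFinEquiv finSumFinEquiv = Matrix.fromBlocks (u • 1) 0 X Y := by
    ext a b
    cases a with
    | inl p =>
      cases b with
      | inl q =>
        simp only [Matrix.submatrix_apply, finSumFinEquiv_apply_left, Matrix.fromBlocks_apply₁₁,
          Matrix.smul_apply, Matrix.one_apply, Matrix.of_apply, Fin.coe_castAdd, hC, Cm,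
          smul_eq_mul]
        rw [if_pos p.isLt]
        by_cases h : (q:ℕ) = (p:ℕ)
        · have hpq : p = q := Fin.ext h.symm
          rw [if_pos h, if_pos hpq, mul_one]
        · rw [if_neg h, if_neg (fun hh => h (by rw [hh])), mul_zero]
      | inr q =>
        simp only [Matrix.submatrix_apply, finSumFinEquiv_apply_left, finSumFinEquiv_apply_right,
          Matrix.fromBlocks_apply₁₂, Matrix.zero_apply, Matrix.of_apply, Fin.coe_castAdd,
          Fin.coe_natAdd, hC, Cm]
        have hp := p.isLt
        rw [if_pos hp, if_neg (by omega)]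
    | inr p =>
      cases b with
      | inl q => rfl
      | inr q => rfl
  have hdet : C.det = u^N * Y.det := by
    calc C.det = (C.submatrix finSumFinEquiv finSumFinEquiv).det :=
          (Matrix.det_submatrix_equiv_self _ _).symm
      _ = (Matrix.fromBlocks (u • 1) 0 X Y).det := by rw [hsub]
      _ = (u • (1 : Matrix (Fin N) (Fin N) ℝ)).det * Y.det := Matrix.det_fromBlocks_zero₁₂ _ _ _
      _ = u^N * Y.det := by rw [Matrix.det_smul, Matrix.det_one, Fintype.card_fin, mul_one]
  have hYval : ∀ p q : Fin 2, Y p q =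
      ∑ k ∈ Finset.range (N + (q:ℕ) + 1),
        Jf ((k + (N+2) - (N + (p:ℕ))) % (N+2) + 1) * w^(N + (q:ℕ) - k) := by
    intro p q
    simp only [hY, Matrix.of_apply, hC, Cm, finSumFinEquiv_apply_right, Fin.coe_natAdd]
    rw [if_neg (by omega)]
  rw [hdet, Matrix.det_fin_two, hYval, hYval, hYval, hYval]
  norm_num

section Main3

variable (J : ℕ → ℝ) (hJ0 : J 0 = 0) (hJ1 : J 1 = 1)
  (hrec : ∀ m : ℕ, J (m + 2) = J (m + 1) + 2 * J m)

include hJ0 hJ1 hrec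

lemma det_circ_jac (N : ℕ) :
    (gCirc (N+2) 1 (fun m => J (m+1))).det =
      (1 - J (N+2)) * (1 - J (N+3))^N +
        2 * ∑ k ∈ Finset.range N, J (k+1) * (1 - J (N+3))^k * (2 * J (N+2))^(N-k) := by
  have hpos := jac_pos J hJ0 hJ1 hrec
  have hu : (1 - J (N+3)) ≠ 0 := by
    have h1 := (hpos (N+1)).2
    have h2 := (hpos N).2
    have h3 := hrec (N+1)
    have : (1:ℝ) - J (N+3) < 0 := by linarith
    exact ne_of_lt this
  set u := 1 - J (N+3) with hu_def
  set v := 2 * J (N+2) with hv_def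
  set w := v / u with hw_def
  have huw : u * w = v := by rw [hw_def, mul_comm]; exact div_mul_cancel₀ v hu
  have hdetchain : (gCirc (N+2) 1 (fun m => J (m+1))).det = (Cm N u w J).det := by
    have h1 := PA_eq J hJ0 hJ1 hrec N
    have h2 := BT_eq J N u v w hu huw
    have : (Cm N u w J).det = (gCirc (N+2) 1 (fun m => J (m+1))).det := by
      rw [← h2, Matrix.det_mul, Tm_det, mul_one, ← h1, Matrix.det_mul, Pm_det, one_mul]
    exact this.symm
  rw [hdetchain, Cm_det]
  set Sa := ∑ k ∈ Finset.range (N+1), J (k+2) * w^(N-k) with hSa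
  set Sb := ∑ k ∈ Finset.range N, J (k+3) * w^(N-k) with hSb
  have hJ2 : J 2 = 1 := by rw [hrec 0, hJ0, hJ1]; ring
  have hY00 : (∑ k ∈ Finset.range (N+1), J ((k + (N+2) - N) % (N+2) + 1) * w^(N - k))
      = 1 + Sb := by
    rw [Finset.sum_range_succ]
    have hlast : (N + (N+2) - N) % (N+2) = 0 := hmod N _ 0 (by omega) (by omega)
    rw [hlast]
    have hsum : ∑ k ∈ Finset.range N, J ((k + (N+2) - N) % (N+2) + 1) * w^(N-k) = Sb := by
      apply Finset.sum_congr rfl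
      intro k hk
      have hk' : k < N := Finset.mem_range.mp hk
      rw [hmod N _ (k+2) (by omega) (by omega)]
    rw [hsum, Nat.sub_self, pow_zero]
    norm_num [hJ1]
    ring
  have hY10 : (∑ k ∈ Finset.range (N+1), J ((k + (N+2) - (N+1)) % (N+2) + 1) * w^(N - k))
      = Sa := by
    apply Finset.sum_congr rfl
    intro k hk
    have hk' : k < N+1 := Finset.mem_range.mp hk
    rw [hmod N _ (k+1) (by omega) (by omega)]
  have hY11 : (∑ k ∈ Finset.range (N+2), J ((k + (N+2) - (N+1)) % (N+2) + 1) * w^(N+1 - k))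
      = 1 + w * Sa := by
    rw [Finset.sum_range_succ]
    have hlast : ((N+1) + (N+2) - (N+1)) % (N+2) = 0 := hmod N _ 0 (by omega) (by omega)
    rw [hlast]
    have hsum : ∑ k ∈ Finset.range (N+1), J ((k + (N+2) - (N+1)) % (N+2) + 1) * w^(N+1-k)
        = w * Sa := by
      rw [hSa, Finset.mul_sum]
      apply Finset.sum_congr rfl
      intro k hk
      have hk' : k < N+1 := Finset.mem_range.mp hk
      rw [hmod N _ (k+1) (by omega) (by omega)]
      have he : N+1-k = (N-k)+1 := by omega
      rw [he, pow_succ]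
      ring
    rw [hsum, Nat.sub_self, pow_zero]
    norm_num [hJ1]
    ring
  have hY01 : (∑ k ∈ Finset.range (N+2), J ((k + (N+2) - N) % (N+2) + 1) * w^(N+1 - k))
      = 1 + w + w * Sb := by
    rw [Finset.sum_range_succ, Finset.sum_range_succ]
    have hlast : ((N+1) + (N+2) - N) % (N+2) = 1 := hmod N _ 1 (by omega) (by omega)
    have hlast2 : (N + (N+2) - N) % (N+2) = 0 := hmod N _ 0 (by omega) (by omega)
    rw [hlast, hlast2]
    have hsum : ∑ k ∈ Finset.range N, J ((k + (N+2) - N) % (N+2) + 1) * w^(N+1-k)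
        = w * Sb := by
      rw [hSb, Finset.mul_sum]
      apply Finset.sum_congr rfl
      intro k hk
      have hk' : k < N := Finset.mem_range.mp hk
      rw [hmod N _ (k+2) (by omega) (by omega)]
      have he : N+1-k = (N-k)+1 := by omega
      rw [he, pow_succ]
      ring
    rw [hsum]
    have he1 : N+1-N = 1 := by omega
    have he2 : N+1-(N+1) = 0 := by omega
    rw [he1, he2, pow_zero, pow_one]
    norm_num [hJ1, hJ2]
    ring
  rw [hY00, hY10, hY11, hY01]
  have hSa' : Sa = (∑ k ∈ Finset.range N, J (k+2) * w^(N-k)) + J (N+2) := by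
    rw [hSa, Finset.sum_range_succ, Nat.sub_self, pow_zero, mul_one]
  have hdiff : Sb - (∑ k ∈ Finset.range N, J (k+2) * w^(N-k))
      = ∑ k ∈ Finset.range N, 2 * J (k+1) * w^(N-k) := by
    rw [hSb, ← Finset.sum_sub_distrib]
    apply Finset.sum_congr rfl
    intro k _
    linear_combination w^(N-k) * hrec (k+1)
  have hkey : (1+Sb)*(1+w*Sa) - (1+w+w*Sb)*Sa
      = 1 - J (N+2) + ∑ k ∈ Finset.range N, 2 * J (k+1) * w^(N-k) := by
    have h2x2 : (1+Sb)*(1+w*Sa) - (1+w+w*Sb)*Sa = 1 + Sb - Sa := by ring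
    rw [h2x2, hSa']
    linarith [hdiff]
  rw [hkey, mul_add, Finset.mul_sum]
  have hterm : ∀ k ∈ Finset.range N, u^N * (2 * J (k+1) * w^(N-k))
      = 2 * (J (k+1) * u^k * v^(N-k)) := by
    intro k hk
    have hk' : k < N := Finset.mem_range.mp hk
    have hupow : u^N = u^k * u^(N-k) := by rw [← pow_add]; congr 1; omega
    have hne : u^(N-k) ≠ 0 := pow_ne_zero _ hu
    rw [hupow, hw_def, div_pow]
    field_simp
  rw [Finset.sum_congr rfl hterm, ← Finset.mul_sum]
  ring

end Main3

lemma sum_Icc_one (f : ℕ → ℝ) (N : ℕ) :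
    ∑ i ∈ Finset.Icc 1 N, f i = ∑ k ∈ Finset.range N, f (k+1) := by
  induction N with
  | zero => simp
  | succ k ih => rw [Finset.sum_Icc_succ_top (by omega), ih, Finset.sum_range_succ]

lemma gCirc_factor (n g : ℕ) (hn : 0 < n) (a : ℕ → ℝ) :
    gCirc n g a = Qg n g * gCirc n 1 a := by
  ext i j
  rw [Matrix.mul_apply]
  symm
  have hm : (i.val * g) % n < n := Nat.mod_lt _ hn
  have key : ∀ k : Fin n, Qg n g i k = if k = (⟨(i.val * g) % n, hm⟩ : Fin n) then 1 else 0 := by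
    intro k
    simp only [Qg, gCirc, Matrix.of_apply]
    congr 1
    simp only [eq_iff_iff, Fin.ext_iff]
    constructor
    · intro h
      have hdvd : n ∣ (k.val + (n - (i.val * g) % n)) := Nat.dvd_of_mod_eq_zero h
      rcases Nat.eq_zero_or_pos (k.val + (n - (i.val * g) % n)) with h0 | h0
      · omega
      · have := Nat.eq_of_dvd_of_lt_two_mul (by omega) hdvd (by omega)
        omega
    · intro h
      have : k.val + (n - (i.val * g) % n) = n := by omega
      rw [this, Nat.mod_self]
  calc (∑ k : Fin n, Qg n g i k * gCirc n 1 a k j)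
      = ∑ k : Fin n, (if k = (⟨(i.val * g) % n, hm⟩ : Fin n) then gCirc n 1 a k j else 0) := by
        refine Finset.sum_congr rfl fun k _ => ?_
        rw [key k]; split_ifs <;> simp
    _ = gCirc n 1 a ⟨(i.val * g) % n, hm⟩ j := by rw [Finset.sum_ite_eq']; simp
    _ = gCirc n g a i j := by
        simp only [gCirc, Matrix.of_apply, mul_one, Nat.mod_eq_of_lt hm]

/-- Determinant of the g-circulant matrix of Jacobsthal numbers. -/
theorem det_gCirc_jacobsthal
    (J : ℕ → ℝ) (hJ0 : J 0 = 0) (hJ1 : J 1 = 1)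
    (hrec : ∀ m : ℕ, J (m + 2) = J (m + 1) + 2 * J m)
    (n r : ℕ) (hn : 2 ≤ n) (hgcd : Nat.gcd n r = 1) :
    (gCirc n r (fun m => J (m + 1))).det =
      (Qg n r).det *
        ((1 - J (n + 1)) ^ (n - 1) +
          2 ^ (n - 1) * J n ^ (n - 2) *
            ∑ i ∈ Finset.Icc 1 (n - 1),
              J i * ((1 - J (n + 1)) / (2 * J n)) ^ (i - 1)) := by
  obtain ⟨N, rfl⟩ : ∃ N, n = N + 2 := ⟨n - 2, by omega⟩
  rw [gCirc_factor (N+2) r (by omega), Matrix.det_mul]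
  congr 1
  rw [det_circ_jac J hJ0 hJ1 hrec N]
  have hpos := jac_pos J hJ0 hJ1 hrec
  have hvne : (2 * J (N+2) : ℝ) ≠ 0 := by
    have := (hpos (N+1)).2
    positivity
  have hco : N + 2 - 1 = N + 1 := by omega
  have hco2 : N + 2 - 2 = N := by omega
  have hco3 : N + 2 + 1 = N + 3 := by omega
  rw [hco, hco2, hco3]
  rw [sum_Icc_one (fun i => J i * ((1 - J (N+3)) / (2 * J (N+2))) ^ (i - 1)) (N+1)]
  simp only [Nat.add_sub_cancel]
  have key : ∀ k, k ≤ N →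
      2^(N+1) * J (N+2)^N * ((1 - J (N+3)) / (2 * J (N+2)))^k
        = 2 * (1 - J (N+3))^k * (2 * J (N+2))^(N-k) := by
    intro k hk
    rw [div_pow, ← mul_div_assoc, div_eq_iff (pow_ne_zero _ hvne)]
    have hv : (2 * J (N+2))^(N-k) * (2 * J (N+2))^k = 2^N * J (N+2)^N := by
      rw [← pow_add, show N-k+k = N by omega, mul_pow]
    linear_combination (-2 * (1 - J (N+3))^k) * hv
  rw [Finset.sum_range_succ, mul_add]
  have hbig : 2^(N+1) * J (N+2)^N *
      (∑ k ∈ Finset.range N, J (k+1) * ((1 - J (N+3)) / (2 * J (N+2)))^k)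
      = 2 * ∑ k ∈ Finset.range N, J (k+1) * (1 - J (N+3))^k * (2 * J (N+2))^(N-k) := by
    rw [Finset.mul_sum, Finset.mul_sum]
    apply Finset.sum_congr rfl
    intro k hk
    have hk' : k ≤ N := by have := Finset.mem_range.mp hk; omega
    linear_combination J (k+1) * key k hk'
  rw [hbig]
  have htop := key N le_rfl
  rw [Nat.sub_self] at htop
  have hrec' := hrec (N+1)
  linear_combination (1 - J (N+3))^N * hrec' - J (N+1) * htop
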